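/- arXiv:0911.4917 — 2 statements merged into one kernel-verified Lean document; each statement's English description precedes it below -/
import Mathlib

section
/- Let Z be a random variable taking the value 1 with probability p, the value −1 with probability q, and the value 0 with probability 1 − p − q, where p > 0, q > 0 and p + q ≤ 1. Let μ = E(Z) = p − q. Then for every λ > 1/(1 − |μ|): Var(Z) < λ · E( |Z − μ|³ · exp(λ·|Z − μ|) ). -/
open MeasureTheory


private lemma integral_three {Ω : Type} [MeasurableSpace Ω] (P : Measure Ω) [IsProbabilityMeasure P]
    (Z : Ω → ℝ) (hZm : Measurable Z)
    (p q : ℝ) (hp : 0 ≤ p) (hq : 0 ≤ q) (hpq : p + q ≤ 1)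
    (h1 : P {ω | Z ω = 1} = ENNReal.ofReal p)
    (h2 : P {ω | Z ω = -1} = ENNReal.ofReal q)
    (h0 : P {ω | Z ω = 0} = ENNReal.ofReal (1 - p - q))
    (f : ℝ → ℝ) :
    ∫ ω, f (Z ω) ∂P = f 1 * p + f (-1) * q + f 0 * (1 - p - q) := by
  have hA : MeasurableSet {ω | Z ω = 1} := hZm (measurableSet_singleton 1)
  have hB : MeasurableSet {ω | Z ω = -1} := hZm (measurableSet_singleton (-1))
  have hC : MeasurableSet {ω | Z ω = 0} := hZm (measurableSet_singleton 0)
  set A := {ω | Z ω = 1}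
  set B := {ω | Z ω = -1}
  set C := {ω | Z ω = 0}
  have hdAB : Disjoint A B := by
    rw [Set.disjoint_left]; intro ω hω1 hω2
    simp only [A, B, Set.mem_setOf_eq] at hω1 hω2; rw [hω1] at hω2; norm_num at hω2
  have hdABC : Disjoint (A ∪ B) C := by
    rw [Set.disjoint_left]; intro ω hω1 hω2
    simp only [A, B, C, Set.mem_setOf_eq, Set.mem_union] at hω1 hω2
    rcases hω1 with h | h <;> rw [hω2] at h <;> norm_num at h
  have hunion : P (A ∪ B ∪ C) = 1 := by
    rw [measure_union hdABC hC, measure_union hdAB hB, h1, h2, h0,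
      ← ENNReal.ofReal_add hp hq, ← ENNReal.ofReal_add (by linarith) (by linarith)]
    norm_num
  have hcompl : P (A ∪ B ∪ C)ᶜ = 0 := by
    rw [measure_compl ((hA.union hB).union hC) (measure_ne_top _ _), hunion]
    simp
  set g : Ω → ℝ := fun ω => A.indicator (fun _ => f 1) ω + B.indicator (fun _ => f (-1)) ω
    + C.indicator (fun _ => f 0) ω with hg
  have hae : (fun ω => f (Z ω)) =ᵐ[P] g := by
    rw [Filter.EventuallyEq, ae_iff]
    refine measure_mono_null ?_ hcompl
    intro ω hω
    simp only [Set.mem_setOf_eq] at hω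
    simp only [Set.mem_compl_iff, Set.mem_union]
    intro hmem
    apply hω
    rcases hmem with (h | h) | h
    · have e1 : Z ω = 1 := h
      have nB : ω ∉ B := by simp only [B, Set.mem_setOf_eq, e1]; norm_num
      have nC : ω ∉ C := by simp only [C, Set.mem_setOf_eq, e1]; norm_num
      show f (Z ω) = _ + _ + _
      rw [Set.indicator_of_mem h, Set.indicator_of_notMem nB, Set.indicator_of_notMem nC, e1]
      ring
    · have e1 : Z ω = -1 := h
      have nA : ω ∉ A := by simp only [A, Set.mem_setOf_eq, e1]; norm_num
      have nC : ω ∉ C := by simp only [C, Set.mem_setOf_eq, e1]; norm_num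
      show f (Z ω) = _ + _ + _
      rw [Set.indicator_of_mem h, Set.indicator_of_notMem nA, Set.indicator_of_notMem nC, e1]
      ring
    · have e1 : Z ω = 0 := h
      have nA : ω ∉ A := by simp only [A, Set.mem_setOf_eq, e1]; norm_num
      have nB : ω ∉ B := by simp only [B, Set.mem_setOf_eq, e1]; norm_num
      show f (Z ω) = _ + _ + _
      rw [Set.indicator_of_mem h, Set.indicator_of_notMem nA, Set.indicator_of_notMem nB, e1]
      ring
  have iA : Integrable (A.indicator (fun _ => f 1)) P := (integrable_const (f 1)).indicator hA
  have iB : Integrable (B.indicator (fun _ => f (-1))) P := (integrable_const (f (-1))).indicator hB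
  have iC : Integrable (C.indicator (fun _ => f 0)) P := (integrable_const (f 0)).indicator hC
  rw [integral_congr_ae hae, hg]
  simp only []
  have iAB : Integrable (fun ω => A.indicator (fun _ => f 1) ω + B.indicator (fun _ => f (-1)) ω) P := iA.add iB
  rw [integral_add iAB iC, integral_add iA iB,
    integral_indicator_const _ hA, integral_indicator_const _ hB, integral_indicator_const _ hC,
    measureReal_def, measureReal_def, measureReal_def,
    h1, h2, h0, ENNReal.toReal_ofReal hp, ENNReal.toReal_ofReal hq,
    ENNReal.toReal_ofReal (by linarith)]
  simp [mul_comm]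


lemma key_ineq (p q μ l : ℝ) (hp : 0 < p) (hq : 0 < q) (hpq : p + q ≤ 1)
    (hμ : μ = p - q) (hl : 1 / (1 - |μ|) < l) :
    p * (1 - μ)^2 + q * (1 + μ)^2 + (1 - p - q) * μ^2 <
      l * (p * (1 - μ)^3 * Real.exp (l * (1 - μ)) + q * (1 + μ)^3 * Real.exp (l * (1 + μ))
        + (1 - p - q) * |μ|^3 * Real.exp (l * |μ|)) := by
  set m := |μ| with hm
  have hm0 : 0 ≤ m := abs_nonneg μ
  have hm1 : m < 1 := by
    rw [hm, hμ, abs_lt]; constructor <;> linarith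
  have h1m : 0 < 1 - m := by linarith
  have hl1 : 1 < l * (1 - m) := by
    rw [div_lt_iff₀ h1m] at hl; linarith
  have hl0 : 0 < l := by nlinarith
  have hμm : μ ≤ m := le_abs_self μ
  have hμm' : -m ≤ μ := neg_abs_le μ
  have ha : 1 < l * (1 - μ) := by nlinarith
  have hb : 1 < l * (1 + μ) := by nlinarith
  have ht0 : 0 ≤ l * m := by positivity
  set a := l * (1 - μ) with hadef
  set b := l * (1 + μ) with hbdef
  set t := l * m with htdef
  have hea : (2.7182818283 : ℝ) < a * Real.exp a := by
    have h1 : Real.exp 1 < Real.exp a := Real.exp_lt_exp.mpr ha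
    have h3 : 1 * Real.exp 1 < a * Real.exp a :=
      mul_lt_mul' ha.le h1 (Real.exp_pos 1).le (lt_trans one_pos ha)
    have h2 := Real.exp_one_gt_d9
    linarith
  have heb : (2.7182818283 : ℝ) < b * Real.exp b := by
    have h1 : Real.exp 1 < Real.exp b := Real.exp_lt_exp.mpr hb
    have h3 : 1 * Real.exp 1 < b * Real.exp b :=
      mul_lt_mul' hb.le h1 (Real.exp_pos 1).le (lt_trans one_pos hb)
    have h2 := Real.exp_one_gt_d9
    linarith
  have het0 : 0 ≤ t * Real.exp t := mul_nonneg ht0 (Real.exp_pos t).le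
  have hμ2 : μ^2 = m^2 := (sq_abs μ).symm
  -- the difference identity
  have hident : l * (p * (1 - μ)^3 * Real.exp a + q * (1 + μ)^3 * Real.exp b
        + (1 - p - q) * m^3 * Real.exp t)
      - (p * (1 - μ)^2 + q * (1 + μ)^2 + (1 - p - q) * μ^2)
      = p * (1 - μ)^2 * (a * Real.exp a - 1) + q * (1 + μ)^2 * (b * Real.exp b - 1)
        + (1 - p - q) * m^2 * (t * Real.exp t - 1) := by
    rw [hμ2, hadef, hbdef, htdef]; ring
  have hr : 0 ≤ 1 - p - q := by linarith
  have h1μ : 0 < 1 - μ := by linarith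
  have h1μ' : 0 < 1 + μ := by linarith
  have h : 0 < p * (1 - μ)^2 * (a * Real.exp a - 1) + q * (1 + μ)^2 * (b * Real.exp b - 1)
        + (1 - p - q) * m^2 * (t * Real.exp t - 1) := by
   clear hident
   by_cases hc : 1 ≤ t * Real.exp t
   · have t1 : 0 < p * (1 - μ)^2 * (a * Real.exp a - 1) :=
       mul_pos (mul_pos hp (pow_pos h1μ 2)) (by linarith)
     have t2 : 0 < q * (1 + μ)^2 * (b * Real.exp b - 1) :=
       mul_pos (mul_pos hq (pow_pos h1μ' 2)) (by linarith)
     have t3 : 0 ≤ (1 - p - q) * m^2 * (t * Real.exp t - 1) :=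
       mul_nonneg (mul_nonneg hr (sq_nonneg m)) (by linarith)
     linarith
   · rw [not_le] at hc
     -- t < 0.575
     have ht : t < 0.575 := by
       by_contra hcon
       push_neg at hcon
       have e16 : Real.exp (0.575 : ℝ) = Real.exp 0.0359375 ^ (16:ℕ) := by
         rw [← Real.exp_nat_mul]; norm_num
       have e1 : (1.0359375 : ℝ) ≤ Real.exp 0.0359375 := by
         have := Real.add_one_le_exp (0.0359375 : ℝ); linarith
       have e2 : (1.0359375 : ℝ)^(16:ℕ) ≤ Real.exp 0.0359375 ^ (16:ℕ) :=
         pow_le_pow_left₀ (by norm_num) e1 16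
       have e3 : Real.exp (0.575:ℝ) ≤ Real.exp t := Real.exp_le_exp.mpr hcon
       have e4 : (1:ℝ) < 0.575 * (1.0359375 : ℝ)^(16:ℕ) := by norm_num
       have e5 : (0.575:ℝ) * Real.exp 0.575 ≤ t * Real.exp t :=
         mul_le_mul hcon e3 (Real.exp_pos _).le (le_trans (by norm_num) hcon)
       have e6 : (0.575:ℝ) * ((1.0359375:ℝ)^(16:ℕ)) ≤ 0.575 * Real.exp 0.575 := by
         rw [e16]
         exact mul_le_mul_of_nonneg_left e2 (by norm_num)
       linarith
     have hms : m ≤ p + q := by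
       rw [hm, hμ, abs_le]; constructor <;> linarith
     have hm23 : m < 23/63 := by
       rcases eq_or_lt_of_le hm0 with h | h
       · rw [← h]; norm_num
       · have h2 : m * 1 < m * (l * (1 - m)) := mul_lt_mul_of_pos_left hl1 h
         have h3 : t * (1 - m) < 0.575 * (1 - m) := mul_lt_mul_of_pos_right ht h1m
         have h4 : t * (1 - m) = m * (l * (1 - m)) := by rw [htdef]; ring
         linarith
     have e1' : p * (1 - μ)^2 * (a * Real.exp a - 1) ≥ 1.7182818283 * (p * (1 - μ)^2) := by
       have hfac : (1.7182818283:ℝ) ≤ a * Real.exp a - 1 := by linarith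
       have hnn : (0:ℝ) ≤ p * (1 - μ)^2 := by positivity
       have := mul_le_mul_of_nonneg_left hfac hnn
       linarith
     have e2' : q * (1 + μ)^2 * (b * Real.exp b - 1) ≥ 1.7182818283 * (q * (1 + μ)^2) := by
       have hfac : (1.7182818283:ℝ) ≤ b * Real.exp b - 1 := by linarith
       have hnn : (0:ℝ) ≤ q * (1 + μ)^2 := by positivity
       have := mul_le_mul_of_nonneg_left hfac hnn
       linarith
     have e3' : (1 - p - q) * m^2 * (t * Real.exp t - 1) ≥ -(m^2) := by
       have h5 : (-1:ℝ) ≤ t * Real.exp t - 1 := by linarith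
       have h6 : (0:ℝ) ≤ (1 - p - q) * m^2 := mul_nonneg hr (sq_nonneg m)
       have h7 := mul_le_mul_of_nonneg_left h5 h6
       have h8 : (1 - p - q) * m^2 ≤ 1 * m^2 :=
         mul_le_mul_of_nonneg_right (by linarith) (sq_nonneg m)
       linarith
     have key : 0 < 1.7182818283 * (p * (1 - μ)^2) + 1.7182818283 * (q * (1 + μ)^2) - m^2 := by
       have hmm : m * m ≤ (p + q) * m := mul_le_mul_of_nonneg_right hms hm0
       have hspos : 0 < p + q := by linarith
       have hmm2 : (p + q) * m < (p + q) * (23/63) := mul_lt_mul_of_pos_left hm23 hspos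
       have hid : p * (1 - μ)^2 + q * (1 + μ)^2 = (p + q) + (p + q) * m^2 - 2 * m^2 := by
         rw [← hμ2, hμ]; ring
       have h9 : (0:ℝ) ≤ (p + q) * m^2 := by positivity
       have h10 : m^2 = m * m := sq m
       linarith
     linarith

  linarith

/-- let `Z` take the value `1` with probability `p`, `-1` with probability `q` and
`0` with probability `1 - p - q`, where `p, q > 0` and `p + q ≤ 1`, and let `μ = E(Z) = p - q`.
Then for every `l > 1/(1 - |μ|)`:
`Var(Z) < l · E(|Z - μ|³ e^{l|Z - μ|})`. -/
theorem stmt8 (Ω : Type) [MeasurableSpace Ω] (P : Measure Ω) [IsProbabilityMeasure P]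
    (Z : Ω → ℝ) (hZm : Measurable Z)
    (p q : ℝ) (hp : 0 < p) (hq : 0 < q) (hpq : p + q ≤ 1)
    (h1 : P {ω | Z ω = 1} = ENNReal.ofReal p)
    (h2 : P {ω | Z ω = -1} = ENNReal.ofReal q)
    (h0 : P {ω | Z ω = 0} = ENNReal.ofReal (1 - p - q))
    (μ : ℝ) (hμ : μ = p - q)
    (l : ℝ) (hl : 1 / (1 - |μ|) < l) :
    ∫ ω, (Z ω - μ)^2 ∂P < l * ∫ ω, |Z ω - μ|^3 * Real.exp (l * |Z ω - μ|) ∂P := by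
  have hμ1 : |μ| < 1 := by rw [hμ, abs_lt]; constructor <;> linarith
  have e1 := integral_three P Z hZm p q hp.le hq.le hpq h1 h2 h0 (fun x => (x - μ)^2)
  have e2 := integral_three P Z hZm p q hp.le hq.le hpq h1 h2 h0
    (fun x => |x - μ|^3 * Real.exp (l * |x - μ|))
  rw [e1, e2]
  have ha1 : |(1:ℝ) - μ| = 1 - μ := abs_of_pos (by cases abs_lt.mp hμ1; linarith)
  have ha2 : |(-1:ℝ) - μ| = 1 + μ := by
    rw [show (-1:ℝ) - μ = -(1 + μ) by ring, abs_neg]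
    exact abs_of_pos (by cases abs_lt.mp hμ1; linarith)
  have ha3 : |(0:ℝ) - μ| = |μ| := by rw [zero_sub, abs_neg]
  rw [ha1, ha2, ha3]
  have K := key_ineq p q μ l hp hq hpq hμ hl
  nlinarith [K]
end

section
/- Let w = (w_1,…,w_n) be a word over the two-letter ordered alphabet {α_1 < α_2}. Then the length of the longest nondecreasing subsequence of w equals max_{0≤k≤n} ( #{i ≤ k : w_i = α_1} + #{i > k : w_i = α_2} ). Equivalently, setting Z_i = 1 if w_i = α_1 and Z_i = −1 if w_i = α_2, and S_k = Z_1 + ⋯ + Z_k (S_0 = 0), the length of the longest nondecreasing subsequence equals n/2 + max_{0≤k≤n} S_k − S_n/2. -/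
/-- The length of the longest nondecreasing subsequence of `w 0, w 1, …, w (n-1)`. -/
def LI (n : ℕ) (w : ℕ → ℕ) : ℕ :=
  ((Finset.range n).powerset.filter
    (fun s => ∀ i ∈ s, ∀ j ∈ s, i ≤ j → w i ≤ w j)).sup Finset.card

open Finset

private lemma count_split (n k : ℕ) (hk : k ≤ n) (p : ℕ → ℕ) :
    ((range k).filter (fun i => p i = 1)).card
      + ((range n).filter (fun i => k ≤ i ∧ p i = 1)).card
      = ((range n).filter (fun i => p i = 1)).card := by
  have h1 : (range n).filter (fun i => i < k ∧ p i = 1) = (range k).filter (fun i => p i = 1) := by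
    ext i
    simp only [mem_filter, mem_range]
    omega
  rw [← h1, ← card_union_of_disjoint, ← filter_or]
  · apply congrArg
    apply filter_congr
    intro i hi
    simp only [mem_range] at hi
    omega
  · rw [disjoint_filter]
    intro i _ h1 h2
    omega

private lemma sum_Z (m : ℕ) (w : ℕ → ℕ) (hw : ∀ i, w i < 2) :
    ∑ i ∈ Finset.range m, (if w i = 0 then (1 : ℝ) else -1)
      = (((range m).filter (fun i => w i = 0)).card : ℝ)
        - (((range m).filter (fun i => w i = 1)).card : ℝ) := by
  have hpt : ∀ i ∈ range m, (if w i = 0 then (1 : ℝ) else -1)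
      = (if w i = 0 then (1 : ℝ) else 0) - (if w i = 1 then (1 : ℝ) else 0) := by
    intro i _
    have := hw i
    by_cases h : w i = 0
    · rw [if_pos h, if_pos h, if_neg (show ¬ w i = 1 by omega)]; ring
    · rw [if_neg h, if_neg h, if_pos (show w i = 1 by omega)]; ring
  rw [Finset.sum_congr rfl hpt, Finset.sum_sub_distrib, Finset.sum_boole, Finset.sum_boole]

/-- for a binary word `w` (letters `0 < 1`) of length `n`, the length of the
longest nondecreasing subsequence equals
`max_{0≤k≤n} (#{i < k : w_i = 0} + #{k ≤ i < n : w_i = 1})`; equivalently, with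
`Z_i = 1` if `w_i = 0` and `Z_i = -1` if `w_i = 1`, and `S_k = Z_1 + ⋯ + Z_k`, it equals
`n/2 + max_{0≤k≤n} S_k - S_n/2`. -/
theorem stmt11 (n : ℕ) (w : ℕ → ℕ) (hw : ∀ i, w i < 2) :
    LI n w = ((Finset.range (n+1)).sup (fun k =>
        ((Finset.range n).filter (fun i => i < k ∧ w i = 0)).card
        + ((Finset.range n).filter (fun i => k ≤ i ∧ w i = 1)).card))
    ∧ (LI n w : ℝ) = (n : ℝ) / 2
        + ((Finset.range (n+1)).sup' Finset.nonempty_range_add_one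
            (fun k => ∑ i ∈ Finset.range k, (if w i = 0 then (1 : ℝ) else -1)))
        - (∑ i ∈ Finset.range n, (if w i = 0 then (1 : ℝ) else -1)) / 2 := by
  set f : ℕ → ℕ := fun k =>
      ((Finset.range n).filter (fun i => i < k ∧ w i = 0)).card
      + ((Finset.range n).filter (fun i => k ≤ i ∧ w i = 1)).card with hf
  set sk : ℕ → Finset ℕ := fun k =>
      (range n).filter (fun i => (i < k ∧ w i = 0) ∨ (k ≤ i ∧ w i = 1)) with hsk
  have hsk_card : ∀ k, (sk k).card = f k := by
    intro k
    simp only [hsk, hf]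
    rw [filter_or, card_union_of_disjoint]
    rw [disjoint_filter]
    intro i _ h1 h2
    omega
  have hsk_mem : ∀ k, sk k ∈ ((Finset.range n).powerset.filter
      (fun s => ∀ i ∈ s, ∀ j ∈ s, i ≤ j → w i ≤ w j)) := by
    intro k
    rw [mem_filter, mem_powerset]
    refine ⟨filter_subset _ _, ?_⟩
    intro i hi j hj hij
    simp only [hsk, mem_filter] at hi hj
    omega
  have hmain : LI n w = (range (n+1)).sup f := by
    apply le_antisymm
    · apply Finset.sup_le
      intro s hs
      rw [mem_filter, mem_powerset] at hs
      obtain ⟨hsub, hvalid⟩ := hs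
      by_cases hone : ∃ i ∈ s, w i = 1
      · set T := s.filter (fun i => w i = 1) with hT
        have hTne : T.Nonempty := by
          obtain ⟨i, hi, hwi⟩ := hone
          exact ⟨i, by simp [hT, hi, hwi]⟩
        set k := T.min' hTne with hk
        have hkT : k ∈ T := T.min'_mem hTne
        have hks : k ∈ s := (mem_filter.mp hkT).1
        have hwk : w k = 1 := (mem_filter.mp hkT).2
        have hkn : k < n := mem_range.mp (hsub hks)
        have hsubk : s ⊆ sk k := by
          intro i hi
          simp only [hsk, mem_filter]
          refine ⟨mem_range.mp (hsub hi) |> mem_range.mpr, ?_⟩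
          have hwi := hw i
          by_cases h0 : w i = 0
          · left
            refine ⟨?_, h0⟩
            by_contra hcon
            push_neg at hcon
            have := hvalid k hks i hi hcon
            omega
          · right
            have hwi1 : w i = 1 := by omega
            exact ⟨T.min'_le i (mem_filter.mpr ⟨hi, hwi1⟩), hwi1⟩
        calc s.card ≤ (sk k).card := card_le_card hsubk
          _ = f k := hsk_card k
          _ ≤ _ := Finset.le_sup (mem_range.mpr (by omega))
      · push_neg at hone
        have hsubk : s ⊆ sk n := by
          intro i hi
          simp only [hsk, mem_filter]
          have hin : i < n := mem_range.mp (hsub hi)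
          have hwi := hw i
          have := hone i hi
          exact ⟨mem_range.mpr hin, Or.inl ⟨hin, by omega⟩⟩
        calc s.card ≤ (sk n).card := card_le_card hsubk
          _ = f n := hsk_card n
          _ ≤ _ := Finset.le_sup (mem_range.mpr (by omega))
    · apply Finset.sup_le
      intro k hk
      rw [← hsk_card k]
      exact Finset.le_sup (hsk_mem k)
  refine ⟨hmain, ?_⟩
  have hfk : ∀ k ∈ range (n+1), ((f k : ℕ) : ℝ)
      = (∑ i ∈ Finset.range k, (if w i = 0 then (1 : ℝ) else -1))
        + (((range n).filter (fun i => w i = 1)).card : ℝ) := by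
    intro k hk
    have hkn : k ≤ n := by rw [mem_range] at hk; omega
    have h1 : (range n).filter (fun i => i < k ∧ w i = 0)
        = (range k).filter (fun i => w i = 0) := by
      ext i
      simp only [mem_filter, mem_range]
      omega
    have h2 := count_split n k hkn w
    have h3 := sum_Z k w hw
    simp only [hf]
    rw [h1, h3]
    have h2' : ((((range n).filter (fun i => k ≤ i ∧ w i = 1)).card : ℕ) : ℝ)
        = ((((range n).filter (fun i => w i = 1)).card : ℕ) : ℝ)
          - ((((range k).filter (fun i => w i = 1)).card : ℕ) : ℝ) := by
      push_cast [← h2]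
      ring
    push_cast
    rw [h2']
    ring
  have hcast : (((Finset.range (n+1)).sup f : ℕ) : ℝ)
      = (range (n+1)).sup' Finset.nonempty_range_add_one (fun k => ((f k : ℕ) : ℝ)) := by
    have h := Finset.comp_sup'_eq_sup'_comp (s := range (n+1)) Finset.nonempty_range_add_one
        (f := f) (Nat.cast : ℕ → ℝ) (fun x y => by simp [Nat.cast_max])
    rw [Finset.sup'_eq_sup] at h
    simp only [Function.comp] at h
    exact h
  have hstep : (range (n+1)).sup' Finset.nonempty_range_add_one (fun k => ((f k : ℕ) : ℝ))
      = (range (n+1)).sup' Finset.nonempty_range_add_one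
          (fun k => (∑ i ∈ Finset.range k, (if w i = 0 then (1 : ℝ) else -1))
            + (((range n).filter (fun i => w i = 1)).card : ℝ)) :=
    Finset.sup'_congr _ rfl hfk
  have hsplit : (range (n+1)).sup' Finset.nonempty_range_add_one
          (fun k => (∑ i ∈ Finset.range k, (if w i = 0 then (1 : ℝ) else -1))
            + (((range n).filter (fun i => w i = 1)).card : ℝ))
      = ((range (n+1)).sup' Finset.nonempty_range_add_one
          (fun k => ∑ i ∈ Finset.range k, (if w i = 0 then (1 : ℝ) else -1)))
        + (((range n).filter (fun i => w i = 1)).card : ℝ) :=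
    (Finset.comp_sup'_eq_sup'_comp _
      (fun x : ℝ => x + (((range n).filter (fun i => w i = 1)).card : ℝ)) (fun x y => by
      simp [max_add_add_right])).symm
  rw [hmain, hcast, hstep, hsplit, sum_Z n w hw]
  have h4 : ((range n).filter (fun i => w i = 0)).card
      + ((range n).filter (fun i => w i = 1)).card = n := by
    have h1 : (range n).filter (fun i => w i = 1)
        = (range n).filter (fun i => ¬ w i = 0) := by
      apply filter_congr
      intro i _
      have := hw i
      constructor
      · intro h; omega
      · intro h; omega
    rw [h1, Finset.card_filter_add_card_filter_not, card_range]
  have h4' : (((range n).filter (fun i => w i = 0)).card : ℝ)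
      + (((range n).filter (fun i => w i = 1)).card : ℝ) = (n : ℝ) := by
    exact_mod_cast h4
  linarith
end
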